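/- Let B₃ be the braid group on three strands, presented with generators s, t and relation s·t·s = t·s·t, let 𝒯(a₁,…,aₙ) = s^{a₁}·t^{−a₂}·s^{a₃}·⋯ ∈ B₃, and let E = 𝒯(1,−1,1) = s·t·s. Then for all integers a₂ and m, the identity 𝒯(−2)·𝒯(0,a₂)·E^{2m+1}·𝒯(2) = 𝒯(−2,a₂−2)·E^{2m+1} holds in B₃. -/

import Mathlib

/-- The single braid relation `s·t·s = t·s·t` for the braid group on three strands,
written as a relator in the free group on two generators. -/
def braidRels : Set (FreeGroup (Fin 2)) :=
  { FreeGroup.of 0 * FreeGroup.of 1 * FreeGroup.of 0 *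
    (FreeGroup.of 1 * FreeGroup.of 0 * FreeGroup.of 1)⁻¹ }

/-- The braid group on three strands, presented with generators `s`, `t`
and the single relation `s·t·s = t·s·t`. -/
abbrev B3 : Type := PresentedGroup braidRels

/-- The first generator `s` of `B₃`. -/
def s : B3 := PresentedGroup.of 0

/-- The second generator `t` of `B₃`. -/
def t : B3 := PresentedGroup.of 1

/-- The half-twist `Δ = s·t·s` (the 3-braid `E = 𝒯(1,−1,1)`). -/
def Δ : B3 := s * t * s

/-- Auxiliary function building `𝒯(a₁,…,aₙ)`: when the flag is `true` the next
entry is a power of `s` (horizontal twists on the top two strands), when `false`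
it is an inverse power of `t`. -/
def Tgo : Bool → List ℤ → B3
  | _, [] => 1
  | true, a :: l => s ^ a * Tgo false l
  | false, a :: l => t ^ (-a) * Tgo true l

/-- The 3-braid `𝒯(a₁,…,aₙ) = s^{a₁} · t^{−a₂} · s^{a₃} · t^{−a₄} · ⋯` in `B₃`. -/
def T (l : List ℤ) : B3 := Tgo true l

/-- The special 3-braid `E = 𝒯(1,−1,1) = s·t·s`. -/
def E : B3 := T [1, -1, 1]

lemma braid : s * t * s = t * s * t := by
  have h : (QuotientGroup.mk (FreeGroup.of 0 * FreeGroup.of 1 * FreeGroup.of 0 *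
      (FreeGroup.of 1 * FreeGroup.of 0 * FreeGroup.of 1)⁻¹) : B3) = 1 := by
    rw [QuotientGroup.eq_one_iff]
    exact Subgroup.subset_normalClosure rfl
  have h2 : s * t * s * (t * s * t)⁻¹ = 1 := by
    exact h
  exact mul_inv_eq_one.mp h2

lemma braid' : s * (t * s) = t * (s * t) := by
  simpa [mul_assoc] using braid

lemma hΔs : Δ * s = t * Δ := by
  show s * t * s * s = t * (s * t * s)
  rw [braid]; simp [mul_assoc, braid']

lemma hΔt : Δ * t = s * Δ := by
  calc Δ * t = s * (t * s * t) := by simp [Δ, mul_assoc]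
    _ = s * (s * t * s) := by rw [← braid]
    _ = s * Δ := rfl

lemma hE : E = Δ := by
  simp [E, T, Tgo, Δ, mul_assoc]

lemma hΔΔt : Commute (Δ * Δ) t := by
  unfold Commute SemiconjBy
  rw [mul_assoc, hΔt, ← mul_assoc, hΔs, mul_assoc]

lemma key (m : ℤ) : Δ ^ (2 * m + 1) * s ^ (2 : ℤ) = t ^ (2 : ℤ) * Δ ^ (2 * m + 1) := by
  have hs2 : (s : B3) ^ (2 : ℤ) = s * s := by
    rw [show (2 : ℤ) = 1 + 1 from rfl, zpow_add, zpow_one]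
  have ht2 : (t : B3) ^ (2 : ℤ) = t * t := by
    rw [show (2 : ℤ) = 1 + 1 from rfl, zpow_add, zpow_one]
  have hΔss : Δ * (s * s) = t * t * Δ := by
    rw [← mul_assoc, hΔs, mul_assoc, hΔs, ← mul_assoc]
  have hc : Commute (Δ ^ (2 * m)) (t ^ (2 : ℤ)) := by
    have : Δ ^ (2 * m) = (Δ * Δ) ^ m := by
      rw [zpow_mul, show (Δ : B3) ^ (2 : ℤ) = Δ * Δ from by
        rw [show (2 : ℤ) = 1 + 1 from rfl, zpow_add, zpow_one]]
    rw [this]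
    exact ((hΔΔt.zpow_left m).zpow_right 2)
  calc Δ ^ (2 * m + 1) * s ^ (2 : ℤ)
      = Δ ^ (2 * m) * (Δ * (s * s)) := by
        rw [zpow_add, zpow_one, hs2, mul_assoc]
    _ = Δ ^ (2 * m) * (t ^ (2 : ℤ) * Δ) := by rw [hΔss, ht2]
    _ = t ^ (2 : ℤ) * (Δ ^ (2 * m) * Δ) := by
        rw [← mul_assoc, hc.eq, mul_assoc]
    _ = t ^ (2 : ℤ) * Δ ^ (2 * m + 1) := by rw [zpow_add, zpow_one]

/-- Case 2, Subcase 1 of the proof of Theorem 3.8: for all integers `a₂` and `m`,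
`𝒯(−2)·𝒯(0,a₂)·E^{2m+1}·𝒯(2) = 𝒯(−2,a₂−2)·E^{2m+1}` in `B₃`. -/
theorem gamma2_case2_subcase1 (a₂ m : ℤ) :
    T [-2] * T [0, a₂] * E ^ (2 * m + 1) * T [2] =
      T [-2, a₂ - 2] * E ^ (2 * m + 1) := by
  simp only [T, Tgo, mul_one, zpow_zero, one_mul, hE]
  rw [mul_assoc, mul_assoc, key m, ← mul_assoc, ← mul_assoc, mul_assoc (s ^ (-2 : ℤ)),
    ← zpow_add]
  ring_nf
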